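/- There do not exist positive integers N_i, N_j, N_k, M such that (with r_i, r_j, r_k and ω_ij, ω_ik, ω_jk as defined) the constraint M·ω_ik/N_j = M·ω_jk/N_i = ω_ij/N_k holds together with 2·(1 − 2ω_ik)·ω_ik = r_j·N_j and 2·(1 − 2ω_jk)·ω_jk = r_i·N_i. (These are among the requirements for the spectral action of a single building block of the third type to be supersymmetric; hence an almost-commutative geometry consisting of a single building block of the third type, together with the building blocks of the first and second type needed to define it, is never supersymmetric.) -/

import Mathlib

set_option maxHeartbeats 1600000

/-- Case `ωik = ωjk` (which forces `Ni = Nj`): contradiction. -/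
lemma caseI_aux (A C Mq s t v o : ℚ) (hA : 0 < A) (hC : 0 < C) (hMq : 0 < Mq)
    (hs : s = 3*A + Mq*C) (ht : t = Mq*A + C)
    (g1 : 2*s*t*v = 2*s*t - 6*A*t - 3*C*s)
    (g2 : s*o = Mq*C - 3*A)
    (c2 : Mq*v*C = o*A)
    (q2 : 2*(1-2*v)*v*s = 3*A) : False := by
  have hspos : 0 < s := by rw [hs]; nlinarith [mul_pos hMq hC]
  have htpos : 0 < t := by rw [ht]; nlinarith [mul_pos hMq hA]
  have hE1 : Mq*C*(2*s*t - 6*A*t - 3*C*s) = 2*t*A*(Mq*C - 3*A) := by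
    linear_combination (-(Mq*C))*g1 + 2*s*t*c2 + 2*t*A*g2
  have hQ : (s*t - (2*s*t - 6*A*t - 3*C*s)) * (2*s*t - 6*A*t - 3*C*s) = 3*A*s*t^2 := by
    linear_combination s*t^2*q2 + (2*s*t*v + s*t - 6*A*t - 3*C*s)*g1
  set P := 2*s*t - 6*A*t - 3*C*s with hPdef
  have hP : 0 < P := by
    by_contra h
    push_neg at h
    nlinarith [hQ, mul_pos hspos htpos, mul_pos hA (mul_pos hspos (mul_pos htpos htpos)),
      sq_nonneg P, mul_nonneg (mul_pos hspos htpos).le (neg_nonneg.2 h)]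
  have hw : 0 < Mq*C - 3*A := by
    by_contra h
    push_neg at h
    nlinarith [hE1, mul_pos (mul_pos hMq hC) hP, mul_pos htpos hA,
      mul_nonneg (mul_pos htpos hA).le (neg_nonneg.2 h)]
  have key' : A*t^2*(2*(Mq*C-3*A)*(s*(Mq*C) - 2*A*(Mq*C-3*A)) - 3*s*(Mq*C)^2) = 0 := by
    linear_combination (Mq*C)^2*hQ - (s*t*Mq*C - 2*t*A*(Mq*C-3*A) - Mq*C*P)*hE1
  have hAt : A*t^2 ≠ 0 := by positivity
  have key : 2*(Mq*C-3*A)*(s*(Mq*C) - 2*A*(Mq*C-3*A)) - 3*s*(Mq*C)^2 = 0 := by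
    rcases mul_eq_zero.mp key' with h | h
    · exact absurd h hAt
    · exact h
  rw [hs] at key
  nlinarith [key, hw, hA, mul_pos hw (mul_pos hw hw), mul_pos hA (mul_pos hw hw),
    mul_pos (mul_pos hA hA) hw, mul_pos (mul_pos hA hA) hA]

/-- Case `ωik + ωjk = 1/4`: contradiction. -/
lemma caseII_aux (A B C Mq ωij ωik ωjk : ℚ) (hA : 0 < A) (hB : 0 < B) (hC : 0 < C)
    (hMq : 0 < Mq)
    (hsum : 1 - 4*(ωik+ωjk) = 0)
    (q1 : 2*(1-2*ωik)*ωik*(A+2*B+Mq*C) = 3*B)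
    (q2 : 2*(1-2*ωjk)*ωjk*(2*A+B+Mq*C) = 3*A)
    (Gij : ωij*((2*A+B+Mq*C)*(A+2*B+Mq*C)) =
      (2*A+B+Mq*C)*(A+2*B+Mq*C) - 3*A*(A+2*B+Mq*C) - 3*B*(2*A+B+Mq*C))
    (c1 : A*ωik = B*ωjk)
    (c2 : Mq*ωjk*C = ωij*A) : False := by
  have hDi : 0 < 2*A+B+Mq*C := by nlinarith [mul_pos hMq hC]
  have hDj : 0 < A+2*B+Mq*C := by nlinarith [mul_pos hMq hC]
  have hv : ωjk = 1/4 - ωik := by linarith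
  have h1 : 0 < 2*(1-2*ωik)*ωik := by
    by_contra h
    push_neg at h
    nlinarith [q1, hB, mul_nonneg (neg_nonneg.2 h) hDj.le]
  have hopos : 0 < ωik := by nlinarith [h1, sq_nonneg ωik]
  have h2 : 0 < 2*(1-2*ωjk)*ωjk := by
    by_contra h
    push_neg at h
    nlinarith [q2, hA, mul_nonneg (neg_nonneg.2 h) hDi.le]
  have hvpos : 0 < ωjk := by nlinarith [h2, sq_nonneg ωjk]
  have holt : ωik < 1/4 := by linarith
  rw [hv] at q2 c1 c2
  have EqX : (1/4 - 4*ωik^2)*(2*A+B+Mq*C) = 3*A := by linear_combination q2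
  have hoij' : ((2*A+B+Mq*C)*(A+2*B+Mq*C))*ωij =
      ((2*A+B+Mq*C)*(A+2*B+Mq*C))*(3/4 - 2*ωik + 8*ωik^2) := by
    linear_combination Gij + (A+2*B+Mq*C)*EqX + (2*A+B+Mq*C)*q1
  have hoij : ωij = 3/4 - 2*ωik + 8*ωik^2 :=
    mul_left_cancel₀ (ne_of_gt (mul_pos hDi hDj)) hoij'
  have c2' : Mq*C*(1/4-ωik) = ωij*A := by linear_combination c2
  have hfin : A*((1/4-4*ωik^2)*(5/4-3*ωik+8*ωik^2) - 3*(1/4-ωik)) = 0 := by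
    linear_combination (1/4-ωik)*EqX - A*(1/4-4*ωik^2)*hoij + (1/4-4*ωik^2)*c1
      - (1/4-4*ωik^2)*c2'
  have hfac : (1/4-ωik)*(32*ωik^3-4*ωik^2+2*ωik-7/4) = 0 := by
    rcases mul_eq_zero.mp hfin with h | h
    · exact absurd h (ne_of_gt hA)
    · linear_combination h
  have hne : (1/4 - ωik) ≠ 0 := by
    have : 0 < 1/4 - ωik := by linarith
    exact ne_of_gt this
  have hcube : 32*ωik^3-4*ωik^2+2*ωik-7/4 = 0 := by
    rcases mul_eq_zero.mp hfac with h | h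
    · exact absurd h hne
    · exact h
  nlinarith [hcube, hopos, holt, mul_pos hopos hopos,
    mul_pos (mul_pos hopos hopos) hopos, sq_nonneg ωik]

/-- **A single building block of the third type is never supersymmetric.**
There are no positive integers `Nᵢ, Nⱼ, Nₖ, M` such that (with `rᵢ, rⱼ, rₖ` and
`ω_ij, ω_ik, ω_jk` as defined) the constraint `M·ω_ik/Nⱼ = M·ω_jk/Nᵢ = ω_ij/Nₖ`
holds together with `2(1 − 2ω_ik)ω_ik = rⱼNⱼ` and `2(1 − 2ω_jk)ω_jk = rᵢNᵢ`. -/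
theorem no_supersymmetric_single_third_type_building_block :
    ¬ ∃ (Ni Nj Nk M : ℕ) (ri rj rk ωij ωik ωjk : ℚ),
      0 < Ni ∧ 0 < Nj ∧ 0 < Nk ∧ 0 < M ∧
      ri = 3 / (2 * (Ni : ℚ) + Nj + M * Nk) ∧
      rj = 3 / ((Ni : ℚ) + 2 * Nj + M * Nk) ∧
      rk = 3 / (M * ((Ni : ℚ) + Nj) + 2 * Nk) ∧
      ωij = 1 - ri * Ni - rj * Nj ∧
      ωik = 1 - ri * Ni - rk * Nk ∧
      ωjk = 1 - rj * Nj - rk * Nk ∧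
      (M * ωik / Nj = M * ωjk / Ni ∧ M * ωjk / Ni = ωij / Nk) ∧
      2 * (1 - 2 * ωik) * ωik = rj * Nj ∧
      2 * (1 - 2 * ωjk) * ωjk = ri * Ni := by
  rintro ⟨Ni, Nj, Nk, M, ri, rj, rk, ωij, ωik, ωjk,
    hNi, hNj, hNk, hM, hri, hrj, hrk, hωij, hωik, hωjk, ⟨hc1, hc2⟩, hq1, hq2⟩
  set A := (Ni : ℚ) with hAdef
  set B := (Nj : ℚ) with hBdef
  set C := (Nk : ℚ) with hCdef
  set Mq := (M : ℚ) with hMdef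
  clear_value A B C Mq
  have hA : 0 < A := by rw [hAdef]; exact_mod_cast hNi
  have hB : 0 < B := by rw [hBdef]; exact_mod_cast hNj
  have hC : 0 < C := by rw [hCdef]; exact_mod_cast hNk
  have hMq : 0 < Mq := by rw [hMdef]; exact_mod_cast hM
  have hDi : 0 < 2*A+B+Mq*C := by nlinarith [mul_pos hMq hC]
  have hDj : 0 < A+2*B+Mq*C := by nlinarith [mul_pos hMq hC]
  have hDk : 0 < Mq*(A+B)+2*C := by nlinarith [mul_pos hMq (by linarith : (0:ℚ) < A+B)]
  have hDi0 : (2*A+B+Mq*C) ≠ 0 := ne_of_gt hDi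
  have hDj0 : (A+2*B+Mq*C) ≠ 0 := ne_of_gt hDj
  have hDk0 : (Mq*(A+B)+2*C) ≠ 0 := ne_of_gt hDk
  -- cleared forms of the ω-definitions
  have Gik : ωik*((2*A+B+Mq*C)*(Mq*(A+B)+2*C)) =
      (2*A+B+Mq*C)*(Mq*(A+B)+2*C) - 3*A*(Mq*(A+B)+2*C) - 3*C*(2*A+B+Mq*C) := by
    rw [hωik, hri, hrk]; field_simp
  have Gjk : ωjk*((A+2*B+Mq*C)*(Mq*(A+B)+2*C)) =
      (A+2*B+Mq*C)*(Mq*(A+B)+2*C) - 3*B*(Mq*(A+B)+2*C) - 3*C*(A+2*B+Mq*C) := by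
    rw [hωjk, hrj, hrk]; field_simp
  have Gij : ωij*((2*A+B+Mq*C)*(A+2*B+Mq*C)) =
      (2*A+B+Mq*C)*(A+2*B+Mq*C) - 3*A*(A+2*B+Mq*C) - 3*B*(2*A+B+Mq*C) := by
    rw [hωij, hri, hrj]; field_simp
  -- cleared forms of the constraints
  have c1m : Mq*ωik*A = Mq*ωjk*B := by
    rw [div_eq_div_iff (ne_of_gt hB) (ne_of_gt hA)] at hc1; exact hc1
  have c1 : A*ωik = B*ωjk := by
    have h := mul_left_cancel₀ (ne_of_gt hMq) (show Mq*(A*ωik) = Mq*(B*ωjk) by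
      linear_combination c1m)
    exact h
  have c2 : Mq*ωjk*C = ωij*A := by
    rw [div_eq_div_iff (ne_of_gt hA) (ne_of_gt hC)] at hc2; exact hc2
  have q1 : 2*(1-2*ωik)*ωik*(A+2*B+Mq*C) = 3*B := by
    rw [hq1, hrj]; field_simp
  have q2 : 2*(1-2*ωjk)*ωjk*(2*A+B+Mq*C) = 3*A := by
    rw [hq2, hri]; field_simp
  -- the factorized consequence
  have d1' : (Mq*(A+B)+2*C) * ((2*A+B+Mq*C)*(A+2*B+Mq*C)*(ωik-ωjk)) =
      (Mq*(A+B)+2*C) * (3*(B*(2*A+B+Mq*C) - A*(A+2*B+Mq*C))) := by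
    linear_combination (A+2*B+Mq*C)*Gik - (2*A+B+Mq*C)*Gjk
  have d1 := mul_left_cancel₀ hDk0 d1'
  have fac' : ((2*A+B+Mq*C)*(A+2*B+Mq*C)) * ((ωik-ωjk)*(1-4*(ωik+ωjk))) =
      ((2*A+B+Mq*C)*(A+2*B+Mq*C)) * 0 := by
    linear_combination (2*A+B+Mq*C)*q1 - (A+2*B+Mq*C)*q2 - d1
  have fac : (ωik-ωjk)*(1-4*(ωik+ωjk)) = 0 := by
    have := mul_left_cancel₀ (mul_ne_zero hDi0 hDj0) fac'
    simpa using this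
  rcases mul_eq_zero.mp fac with hd | hsum
  · -- Case I : ωik = ωjk, hence B = A
    have h0 : (B-A)*((A+B+Mq*C)*3) = 0 := by
      linear_combination (2*A+B+Mq*C)*(A+2*B+Mq*C)*hd - d1
    have hBA : B = A := by
      rcases mul_eq_zero.mp h0 with h | h
      · linarith
      · nlinarith [mul_pos hMq hC]
    rw [hBA] at Gjk Gij q2
    have hs0 : (3*A+Mq*C) ≠ 0 := by
      have : 0 < 3*A+Mq*C := by nlinarith [mul_pos hMq hC]
      exact ne_of_gt this
    have g1 : 2*(3*A+Mq*C)*(Mq*A+C)*ωjk =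
        2*(3*A+Mq*C)*(Mq*A+C) - 6*A*(Mq*A+C) - 3*C*(3*A+Mq*C) := by
      linear_combination Gjk
    have g2' : (3*A+Mq*C)*((3*A+Mq*C)*ωij) = (3*A+Mq*C)*(Mq*C-3*A) := by
      linear_combination Gij
    have g2 := mul_left_cancel₀ hs0 g2'
    have q2' : 2*(1-2*ωjk)*ωjk*(3*A+Mq*C) = 3*A := by linear_combination q2
    exact caseI_aux A C Mq (3*A+Mq*C) (Mq*A+C) ωjk ωij hA hC hMq rfl rfl
      (by linear_combination g1) g2 c2 q2'
  · -- Case II : ωik + ωjk = 1/4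
    exact caseII_aux A B C Mq ωij ωik ωjk hA hB hC hMq hsum q1 q2 Gij c1 c2
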